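/- arXiv:2005.05986 — 2 statements merged into one kernel-verified Lean document; each statement's English description precedes it below -/
import Mathlib

section
/- Let N be a positive integer and let H ∈ M_{2N}(ℂ) be Hermitian and positive semidefinite. Then ker((τ₃H)³) = ker((τ₃H)²): the Jordan blocks of the effective BdG Hamiltonian τ₃H at the zero eigenvalue have size at most two. -/
open Matrix
open scoped ComplexOrder

/-- `τ₃ = σ₃ ⊗ 1_N`, the 2N×2N matrix with block form [[1, 0],[0, -1]]. -/
noncomputable def tau3 (N : ℕ) : Matrix (Fin N ⊕ Fin N) (Fin N ⊕ Fin N) ℂ :=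
  Matrix.fromBlocks 1 0 0 (-1)

lemma tau3_sq (N : ℕ) : tau3 N * tau3 N = 1 := by
  simp [tau3, Matrix.fromBlocks_multiply, ← Matrix.fromBlocks_one]

lemma tau3_herm (N : ℕ) : (tau3 N).IsHermitian := by
  unfold Matrix.IsHermitian
  simp [tau3, Matrix.fromBlocks_conjTranspose]

/-- For a Hermitian matrix, `B(Bx)=0 → Bx=0`. -/
lemma herm_sq_ker {n : Type*} [Fintype n] [DecidableEq n]
    (B : Matrix n n ℂ) (hB : B.IsHermitian) (x : n → ℂ)
    (h : B.mulVec (B.mulVec x) = 0) : B.mulVec x = 0 := by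
  have h1 : star (B.mulVec x) ⬝ᵥ B.mulVec x = 0 := by
    calc star (B.mulVec x) ⬝ᵥ B.mulVec x
        = (Matrix.vecMul (star x) Bᴴ) ⬝ᵥ B.mulVec x := by rw [star_mulVec]
      _ = (Matrix.vecMul (star x) B) ⬝ᵥ B.mulVec x := by rw [hB.eq]
      _ = star x ⬝ᵥ B.mulVec (B.mulVec x) := (dotProduct_mulVec _ _ _).symm
      _ = 0 := by rw [h, dotProduct_zero]
  exact dotProduct_star_self_eq_zero.mp h1

/-- The Jordan blocks of the effective BdG Hamiltonian `τ₃H` of a stable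
free-boson system at the zero eigenvalue have size at most two:
`ker((τ₃H)³) = ker((τ₃H)²)`. -/
theorem stable_boson_zero_jordan_blocks_size_le_two (N : ℕ) (hN : 0 < N)
    (H : Matrix (Fin N ⊕ Fin N) (Fin N ⊕ Fin N) ℂ)
    (hpsd : H.PosSemidef) :
    LinearMap.ker ((tau3 N * H) ^ 3).mulVecLin
      = LinearMap.ker ((tau3 N * H) ^ 2).mulVecLin := by
  obtain ⟨S, hS, hSS⟩ : ∃ S : Matrix (Fin N ⊕ Fin N) (Fin N ⊕ Fin N) ℂ,
      S.IsHermitian ∧ S * S = H := by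
    open scoped MatrixOrder in
    exact ⟨CFC.sqrt H, (CFC.sqrt_nonneg H).posSemidef.1, CFC.sqrt_mul_sqrt_self H hpsd.nonneg⟩
  set M := S * tau3 N * S with hMdef
  have hM : M.IsHermitian := by
    unfold Matrix.IsHermitian
    simp [hMdef, Matrix.conjTranspose_mul, hS.eq, (tau3_herm N).eq, mul_assoc]
  have e3 : (tau3 N * H) ^ 3 = tau3 N * (S * (M * (M * S))) := by
    rw [← hSS, hMdef]; noncomm_ring
  have e2 : (tau3 N * H) ^ 2 = tau3 N * (S * (M * S)) := by
    rw [← hSS, hMdef]; noncomm_ring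
  ext x
  simp only [LinearMap.mem_ker, Matrix.mulVecLin_apply]
  constructor
  · intro h3
    rw [e3] at h3
    have h3' : (S * (M * (M * S))).mulVec x = 0 := by
      have := congrArg (fun v => (tau3 N).mulVec v) h3
      simp only [Matrix.mulVec_mulVec, ← mul_assoc, tau3_sq, one_mul,
        Matrix.mulVec_zero] at this
      rw [mul_assoc, mul_assoc] at this
      exact this
    have h3'' : S.mulVec (S.mulVec ((tau3 N * (S * (M * S))).mulVec x)) = 0 := by
      simp only [Matrix.mulVec_mulVec]
      have heq : S * (S * (tau3 N * (S * (M * S)))) = S * (M * (M * S)) := by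
        rw [hMdef]; noncomm_ring
      rw [heq]; exact h3'
    have h4 := herm_sq_ker S hS _ h3''
    have h5 : M.mulVec (M.mulVec (S.mulVec x)) = 0 := by
      simp only [Matrix.mulVec_mulVec] at h4 ⊢
      have heq : M * (M * S) = S * (tau3 N * (S * (M * S))) := by
        rw [hMdef]; noncomm_ring
      rw [heq]; exact h4
    have h6 := herm_sq_ker M hM _ h5
    rw [e2, ← Matrix.mulVec_mulVec, ← Matrix.mulVec_mulVec, ← Matrix.mulVec_mulVec,
      h6, Matrix.mulVec_zero, Matrix.mulVec_zero]
  · intro h2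
    have : (3 : ℕ) = 2 + 1 := rfl
    rw [this, pow_succ', ← Matrix.mulVec_mulVec, h2, Matrix.mulVec_zero]
end

section
/- Let N be a positive integer and let H ∈ M_{2N}(ℂ) be Hermitian, positive definite, and satisfy the bosonic constraint τ₁ H* τ₁ = H. Then there exist real numbers ε₁, …, ε_N > 0 and vectors ψ₁⁺, …, ψ_N⁺ ∈ ℂ^{2N} such that, setting ψ_n⁻ := τ₁(ψ_n⁺)*, the following hold for all m, n ∈ {1, …, N}: τ₃H ψ_n^± = ±ε_n ψ_n^±; the τ₃-orthonormality relations (ψ_m^±)ᴴ τ₃ ψ_n^± = ±δ_{mn} and (ψ_m^±)ᴴ τ₃ ψ_n^∓ = 0; and the completeness relation Σ_{n=1}^N (ψ_n⁺(ψ_n⁺)ᴴ − ψ_n⁻(ψ_n⁻)ᴴ) τ₃ = 1_{2N}. This is the Bogoliubov diagonalization of a gapped stable quadratic bosonic Hamiltonian. -/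
open Matrix
open scoped ComplexOrder

/-- `τ₁ = σ₁ ⊗ 1_N`, the 2N×2N matrix with block form [[0, 1],[1, 0]]. -/
noncomputable def tau1 (N : ℕ) : Matrix (Fin N ⊕ Fin N) (Fin N ⊕ Fin N) ℂ :=
  Matrix.fromBlocks 0 1 1 0

section Aux

open Polynomial

variable {ι : Type*} [Fintype ι] [DecidableEq ι]

lemma bog_charmatrix_eq (M : Matrix ι ι ℂ) :
    charmatrix M = Matrix.scalar ι (X : ℂ[X]) - M.map C := by
  rw [charmatrix]; rfl

lemma bog_charpoly_conj (P Q M : Matrix ι ι ℂ) (hPQ : P * Q = 1) :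
    (P * M * Q).charpoly = M.charpoly := by
  have hmap : P.map C * Q.map C = 1 := by
    rw [← Matrix.map_mul, hPQ]; exact Matrix.map_one _ (map_zero C) (map_one C)
  have hscal : P.map C * Matrix.scalar ι (X : ℂ[X]) * Q.map C = Matrix.scalar ι X := by
    rw [mul_assoc, (Matrix.scalar_commute (X : ℂ[X]) (fun r => Commute.all _ _) (Q.map C)).eq,
      ← mul_assoc, hmap, one_mul]
  have key : charmatrix (P * M * Q) = P.map C * charmatrix M * Q.map C := by
    rw [bog_charmatrix_eq, bog_charmatrix_eq, mul_sub, sub_mul, hscal,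
      Matrix.map_mul, Matrix.map_mul]
  unfold Matrix.charpoly
  rw [key, det_mul, det_mul]
  have : (P.map C).det * (Q.map C).det = 1 := by rw [← det_mul, hmap, det_one]
  calc (P.map (C : ℂ →+* ℂ[X])).det * (charmatrix M).det * (Q.map C).det
      = (charmatrix M).det * ((P.map C).det * (Q.map C).det) := by ring
    _ = (charmatrix M).det := by rw [this, mul_one]

lemma bog_charpoly_transpose (M : Matrix ι ι ℂ) : Mᵀ.charpoly = M.charpoly := by
  unfold Matrix.charpoly
  rw [← Matrix.det_transpose (charmatrix Mᵀ)]
  congr 1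
  ext i j
  by_cases h : i = j
  · subst h; simp [charmatrix_apply]
  · simp [charmatrix_apply, transpose_apply, Matrix.diagonal_apply, h, Ne.symm h]

lemma bog_charpoly_diagonal (d : ι → ℂ) :
    (diagonal d).charpoly = ∏ i, (X - C (d i)) := by
  unfold Matrix.charpoly
  have : charmatrix (diagonal d) = diagonal (fun i => (X : ℂ[X]) - C (d i)) := by
    ext i j
    by_cases h : i = j
    · subst h; simp [charmatrix_apply]
    · simp [charmatrix_apply, diagonal_apply, h]
  rw [this, det_diagonal]

lemma bog_herm_charpoly (M : Matrix ι ι ℂ) (hM : M.IsHermitian) :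
    M.charpoly = ∏ i, (X - C ((hM.eigenvalues i : ℝ) : ℂ)) := by
  conv_lhs => rw [hM.spectral_theorem, Unitary.conjStarAlgAut_apply]
  rw [bog_charpoly_conj _ _ _ (Matrix.mem_unitaryGroup_iff.mp hM.eigenvectorUnitary.2),
    bog_charpoly_diagonal]
  rfl

lemma bog_neg_herm_charpoly (M : Matrix ι ι ℂ) (hM : M.IsHermitian) :
    (-M).charpoly = ∏ i, (X - C ((-hM.eigenvalues i : ℝ) : ℂ)) := by
  have hneg : -M = (hM.eigenvectorUnitary : Matrix ι ι ℂ) *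
      diagonal (fun i => ((-hM.eigenvalues i : ℝ) : ℂ)) *
      (star hM.eigenvectorUnitary : Matrix ι ι ℂ) := by
    conv_lhs => rw [hM.spectral_theorem, Unitary.conjStarAlgAut_apply]
    have : diagonal (fun i => ((-hM.eigenvalues i : ℝ) : ℂ)) =
        -diagonal (RCLike.ofReal ∘ hM.eigenvalues) := by
      ext i j
      by_cases h : i = j
      · subst h; simp [diagonal_apply]
      · simp [diagonal_apply, h]
    rw [this, Matrix.mul_neg, Matrix.neg_mul]
  rw [hneg, bog_charpoly_conj _ _ _ (Matrix.mem_unitaryGroup_iff.mp hM.eigenvectorUnitary.2),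
    bog_charpoly_diagonal]

lemma bog_map_conj_mulVec_star (A : Matrix ι ι ℂ) (x : ι → ℂ) :
    (A.map (starRingEnd ℂ)) *ᵥ (star x) = star (A *ᵥ x) := by
  funext i
  simp only [Matrix.mulVec, dotProduct, Pi.star_apply, Matrix.map_apply, star_sum,
    star_mul']
  rfl

lemma bog_star_mulVec_dot (A : Matrix ι ι ℂ) (x y : ι → ℂ) :
    star (A *ᵥ x) ⬝ᵥ y = star x ⬝ᵥ (Aᴴ *ᵥ y) := by
  rw [star_mulVec, dotProduct_mulVec]

lemma bog_herm_eig_orth (A : Matrix ι ι ℂ) (hA : A.IsHermitian) (x y : ι → ℂ) (a b : ℂ)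
    (hx : A *ᵥ x = a • x) (hy : A *ᵥ y = b • y) (ha : star a = a) (hab : a ≠ b) :
    star x ⬝ᵥ y = 0 := by
  have h1 : star x ⬝ᵥ (A *ᵥ y) = b * (star x ⬝ᵥ y) := by
    rw [hy, dotProduct_smul]; rfl
  have h2 : star x ⬝ᵥ (A *ᵥ y) = a * (star x ⬝ᵥ y) := by
    calc star x ⬝ᵥ (A *ᵥ y) = star x ⬝ᵥ (Aᴴ *ᵥ y) := by rw [hA.eq]
      _ = star (A *ᵥ x) ⬝ᵥ y := (bog_star_mulVec_dot A x y).symm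
      _ = star (a • x) ⬝ᵥ y := by rw [hx]
      _ = a * (star x ⬝ᵥ y) := by rw [star_smul, smul_dotProduct, ha]; rfl
  have h3 : (a - b) * (star x ⬝ᵥ y) = 0 := by rw [sub_mul, ← h2, ← h1, sub_self]
  rcases mul_eq_zero.mp h3 with h | h
  · exact absurd (sub_eq_zero.mp h) hab
  · exact h

lemma bog_vecMulVec_mulVec_left (A : Matrix ι ι ℂ) (x y : ι → ℂ) :
    vecMulVec (A *ᵥ x) y = A * vecMulVec x y := by
  ext i k
  simp [vecMulVec_apply, Matrix.mul_apply, mulVec, dotProduct, Finset.sum_mul, mul_assoc]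

lemma bog_vecMulVec_mulVec_right (B : Matrix ι ι ℂ) (x y : ι → ℂ) :
    vecMulVec x (B *ᵥ y) = vecMulVec x y * Bᵀ := by
  ext i k
  simp only [vecMulVec_apply, Matrix.mul_apply, mulVec, dotProduct, Finset.mul_sum,
    transpose_apply]
  exact Finset.sum_congr rfl fun j _ => by ring

lemma bog_vecMulVec_smul_left (x y : ι → ℂ) (c : ℂ) :
    vecMulVec (c • x) y = c • vecMulVec x y := by
  ext i k; simp [vecMulVec_apply, mul_assoc]

lemma bog_vecMulVec_smul_right (x y : ι → ℂ) (c : ℂ) :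
    vecMulVec x (c • y) = c • vecMulVec x y := by
  ext i k; simp [vecMulVec_apply]; ring

end Aux

section Tau

variable (N : ℕ)

lemma tau1_mul_tau1 : tau1 N * tau1 N = 1 := by
  simp [tau1, Matrix.fromBlocks_multiply, ← Matrix.fromBlocks_one]

lemma tau3_mul_tau3 : tau3 N * tau3 N = 1 := by
  simp [tau3, Matrix.fromBlocks_multiply, ← Matrix.fromBlocks_one]

lemma tau1_conjTranspose : (tau1 N)ᴴ = tau1 N := by
  simp [tau1, Matrix.fromBlocks_conjTranspose]

lemma tau3_conjTranspose : (tau3 N)ᴴ = tau3 N := by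
  simp [tau3, Matrix.fromBlocks_conjTranspose]

lemma tau1_map_conj : (tau1 N).map (starRingEnd ℂ) = tau1 N := by
  ext i j
  rcases i with i | i <;> rcases j with j | j <;>
    simp [tau1, Matrix.map_apply, Matrix.one_apply, apply_ite (starRingEnd ℂ)]

lemma tau3_map_conj : (tau3 N).map (starRingEnd ℂ) = tau3 N := by
  ext i j
  rcases i with i | i <;> rcases j with j | j <;>
    simp [tau3, Matrix.map_apply, Matrix.one_apply, apply_ite (starRingEnd ℂ)]

lemma tau1_mul_tau3_mul_tau1 : tau1 N * tau3 N * tau1 N = -(tau3 N) := by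
  simp [tau1, tau3, Matrix.fromBlocks_multiply, Matrix.fromBlocks_neg]

end Tau

open scoped MatrixOrder

/-- Bogoliubov diagonalization of a gapped stable quadratic bosonic Hamiltonian:
there exist positive energies `ε n` and eigenvectors `ψ⁺ n` (with particle-hole
partners `ψ⁻ n = τ₁ (ψ⁺ n)*`) satisfying `τ₃H ψ± = ±ε ψ±`, the τ₃-orthonormality
relations, and the completeness relation. -/
theorem bogoliubov_diagonalization (N : ℕ) (hN : 0 < N)
    (H : Matrix (Fin N ⊕ Fin N) (Fin N ⊕ Fin N) ℂ)
    (hherm : H.IsHermitian) (hpos : H.PosDef)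
    (hbos : tau1 N * H.map (starRingEnd ℂ) * tau1 N = H) :
    ∃ (ε : Fin N → ℝ) (ψp ψm : Fin N → (Fin N ⊕ Fin N → ℂ)),
      (∀ n, 0 < ε n) ∧
      (∀ n, ψm n = (tau1 N).mulVec (star (ψp n))) ∧
      (∀ n, (tau3 N * H).mulVec (ψp n) = ((ε n : ℝ) : ℂ) • ψp n) ∧
      (∀ n, (tau3 N * H).mulVec (ψm n) = (-((ε n : ℝ) : ℂ)) • ψm n) ∧
      (∀ m n, star (ψp m) ⬝ᵥ (tau3 N).mulVec (ψp n) = if m = n then (1 : ℂ) else 0) ∧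
      (∀ m n, star (ψm m) ⬝ᵥ (tau3 N).mulVec (ψm n) = if m = n then (-1 : ℂ) else 0) ∧
      (∀ m n, star (ψp m) ⬝ᵥ (tau3 N).mulVec (ψm n) = 0) ∧
      (∀ m n, star (ψm m) ⬝ᵥ (tau3 N).mulVec (ψp n) = 0) ∧
      (∑ n : Fin N, (vecMulVec (ψp n) (star (ψp n)) - vecMulVec (ψm n) (star (ψm n))))
        * tau3 N = 1 := by
  classical
  set T1 := tau1 N with hT1def
  set T3 := tau3 N with hT3def
  have hT1sq : T1 * T1 = 1 := tau1_mul_tau1 N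
  have hT3sq : T3 * T3 = 1 := tau3_mul_tau3 N
  have hT1H : T1ᴴ = T1 := tau1_conjTranspose N
  have hT3H : T3ᴴ = T3 := tau3_conjTranspose N
  have hT1c : T1.map (starRingEnd ℂ) = T1 := tau1_map_conj N
  have hT3c : T3.map (starRingEnd ℂ) = T3 := tau3_map_conj N
  have hT131 : T1 * T3 * T1 = -T3 := tau1_mul_tau3_mul_tau1 N
  -- the square root K of H
  set K := CFC.sqrt H with hKdef
  have hKherm : K.IsHermitian := (Matrix.nonneg_iff_posSemidef.mp (CFC.sqrt_nonneg H)).1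
  have hKK : K * K = H := CFC.sqrt_mul_sqrt_self H (Matrix.nonneg_iff_posSemidef.mpr hpos.posSemidef)
  have hKdet : IsUnit K.det := by
    have h1 : K.det * K.det = H.det := by rw [← det_mul, hKK]
    have h2 : H.det ≠ 0 := by
      have := hpos.det_pos
      intro h; rw [h] at this; exact lt_irrefl _ this
    rw [isUnit_iff_ne_zero]
    intro h; apply h2; rw [← h1, h, mul_zero]
  have hKiK : K⁻¹ * K = 1 := nonsing_inv_mul K hKdet
  have hKKi : K * K⁻¹ = 1 := mul_nonsing_inv K hKdet
  have hKt : K.map (starRingEnd ℂ) = Kᵀ := by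
    ext i j
    have := congrFun (congrFun hKherm.eq j) i
    simpa [Matrix.conjTranspose_apply] using this
  -- bosonic symmetry of K
  have hKbos : T1 * K.map (starRingEnd ℂ) * T1 = K := by
    rw [hKt]
    have hK'sd : (T1 * Kᵀ * T1).PosSemidef := by
      have h1 : T1 * Kᵀ * T1 = T1ᴴ * Kᵀ * T1 := by rw [hT1H]
      rw [h1]
      exact ((Matrix.nonneg_iff_posSemidef.mp (CFC.sqrt_nonneg H)).transpose).conjTranspose_mul_mul_same T1
    have hHt : Hᵀ = H.map (starRingEnd ℂ) := by
      ext i j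
      have := congrFun (congrFun hherm.eq i) j
      simp only [Matrix.conjTranspose_apply] at this
      simp [Matrix.transpose_apply, Matrix.map_apply, ← this]
    have hK'sq : (T1 * Kᵀ * T1) ^ 2 = H := by
      rw [pow_two]
      calc T1 * Kᵀ * T1 * (T1 * Kᵀ * T1)
          = T1 * Kᵀ * ((T1 * T1) * (Kᵀ * T1)) := by noncomm_ring
        _ = T1 * Kᵀ * (Kᵀ * T1) := by rw [hT1sq, one_mul]
        _ = T1 * (Kᵀ * Kᵀ) * T1 := by noncomm_ring
        _ = T1 * (K * K)ᵀ * T1 := by rw [Matrix.transpose_mul]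
        _ = T1 * Hᵀ * T1 := by rw [hKK]
        _ = T1 * H.map (starRingEnd ℂ) * T1 := by rw [hHt]
        _ = H := hbos
    exact (CFC.sqrt_unique (by rw [← pow_two]; exact hK'sq) (Matrix.nonneg_iff_posSemidef.mpr hK'sd)).symm
  -- the Hermitian matrix M = K τ₃ K
  set M := K * T3 * K with hMdef
  have hMherm : M.IsHermitian := by
    have : (K * T3 * K)ᴴ = K * T3 * K := by
      rw [Matrix.conjTranspose_mul, Matrix.conjTranspose_mul, hT3H, hKherm.eq]
      noncomm_ring
    exact this
  set Minv := K⁻¹ * T3 * K⁻¹ with hMinvdef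
  have hMinvM : Minv * M = 1 := by
    calc K⁻¹ * T3 * K⁻¹ * (K * T3 * K)
        = K⁻¹ * T3 * ((K⁻¹ * K) * T3) * K := by noncomm_ring
      _ = K⁻¹ * (T3 * T3) * K := by rw [hKiK]; noncomm_ring
      _ = K⁻¹ * K := by rw [hT3sq]; noncomm_ring
      _ = 1 := hKiK
  have hMMinv : M * Minv = 1 := mul_eq_one_comm.mp hMinvM
  have hMinvherm : Minvᴴ = Minv := by
    rw [hMinvdef, Matrix.conjTranspose_mul, Matrix.conjTranspose_mul, hT3H,
      conjTranspose_nonsing_inv, hKherm.eq]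
    noncomm_ring
  -- bosonic antisymmetry of M
  have hsplit : ∀ A B C' : Matrix (Fin N ⊕ Fin N) (Fin N ⊕ Fin N) ℂ, T1 * (A * B * C') * T1 =
      (T1 * A * T1) * (T1 * B * T1) * (T1 * C' * T1) := by
    intro A B C'
    calc T1 * (A * B * C') * T1
        = (T1 * A) * ((1 : Matrix (Fin N ⊕ Fin N) (Fin N ⊕ Fin N) ℂ) * B * (1 : Matrix (Fin N ⊕ Fin N) (Fin N ⊕ Fin N) ℂ)) * (C' * T1) := by
          noncomm_ring
      _ = (T1 * A) * ((T1 * T1) * B * (T1 * T1)) * (C' * T1) := by rw [hT1sq]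
      _ = (T1 * A * T1) * (T1 * B * T1) * (T1 * C' * T1) := by noncomm_ring
  have hMc : M.map (starRingEnd ℂ) =
      K.map (starRingEnd ℂ) * T3 * K.map (starRingEnd ℂ) := by
    rw [hMdef, Matrix.map_mul, Matrix.map_mul, hT3c]
  have hMbos : T1 * M.map (starRingEnd ℂ) * T1 = -M := by
    rw [hMc, hsplit, hKbos, hT131, hMdef]
    noncomm_ring
  -- eigen data of M
  set μ : (Fin N ⊕ Fin N) → ℝ := hMherm.eigenvalues with hμdef
  set v : (Fin N ⊕ Fin N) → (Fin N ⊕ Fin N) → ℂ := fun i => ⇑(hMherm.eigenvectorBasis i) with hvdef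
  have hveig : ∀ i, M *ᵥ v i = ((μ i : ℝ) : ℂ) • v i := by
    intro i
    have := hMherm.mulVec_eigenvectorBasis i
    rw [hvdef]; rw [this]; funext j; simp [Complex.real_smul, hμdef]
  have hvorth : ∀ i j, star (v i) ⬝ᵥ v j = if i = j then 1 else 0 := by
    intro i j
    rw [dotProduct_comm]
    exact orthonormal_iff_ite.mp hMherm.eigenvectorBasis.orthonormal i j
  have hvne : ∀ i, v i ≠ 0 := by
    intro i h
    apply hMherm.eigenvectorBasis.orthonormal.ne_zero i
    ext j; exact congrFun h j
  have hμ0 : ∀ i, μ i ≠ 0 := by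
    intro i h
    apply hvne i
    have h0 : M *ᵥ v i = 0 := by rw [hveig i, h]; simp
    have := congrArg (fun x => Minv *ᵥ x) h0
    simpa [Matrix.mulVec_mulVec, hMinvM] using this
  -- counting positive eigenvalues
  have hMt : -M = T1 * Mᵀ * T1 := by
    have hc : M.map (starRingEnd ℂ) = Mᵀ := by
      ext i j
      have := congrFun (congrFun hMherm.eq j) i
      simpa [Matrix.conjTranspose_apply] using this
    rw [← hc, hMbos]
  have hcp := bog_herm_charpoly M hMherm
  have hcn : M.charpoly = ∏ i, (Polynomial.X - Polynomial.C ((-μ i : ℝ) : ℂ)) := by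
    have h1 : (-M).charpoly = M.charpoly := by
      rw [hMt, bog_charpoly_conj _ _ _ hT1sq, bog_charpoly_transpose]
    rw [← h1, bog_neg_herm_charpoly M hMherm]
  have hmult : Multiset.map (fun i => ((μ i : ℝ) : ℂ)) Finset.univ.val =
      Multiset.map (fun i => ((-μ i : ℝ) : ℂ)) Finset.univ.val := by
    have heq := hcp.symm.trans hcn
    have hform : ∀ g : (Fin N ⊕ Fin N) → ℂ, ∏ i, (Polynomial.X - Polynomial.C (g i)) =
        ((Finset.univ.val.map g).map (fun a => Polynomial.X - Polynomial.C a)).prod := by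
      intro g
      rw [Multiset.map_map]
      rfl
    rw [hform, hform] at heq
    have := congrArg Polynomial.roots heq
    rwa [Polynomial.roots_multiset_prod_X_sub_C, Polynomial.roots_multiset_prod_X_sub_C] at this
  have hcard : (Finset.univ.filter (fun i : (Fin N ⊕ Fin N) => 0 < μ i)).card =
      (Finset.univ.filter (fun i : (Fin N ⊕ Fin N) => μ i < 0)).card := by
    have := congrArg (Multiset.countP (fun z : ℂ => 0 < z.re)) hmult
    rw [Multiset.countP_map, Multiset.countP_map] at this
    have e1 : ∀ i : (Fin N ⊕ Fin N), (0 < (((μ i : ℝ) : ℂ)).re) = (0 < μ i) := by intro i; simp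
    have e2 : ∀ i : (Fin N ⊕ Fin N), (0 < (((-μ i : ℝ) : ℂ)).re) = (μ i < 0) := by
      intro i; simp [neg_pos]
    simp only [e1, e2] at this
    exact this
  have hNpos : (Finset.univ.filter (fun i : (Fin N ⊕ Fin N) => 0 < μ i)).card = N := by
    have htot := Finset.card_filter_add_card_filter_not
      (s := (Finset.univ : Finset (Fin N ⊕ Fin N))) (p := fun i => 0 < μ i)
    have hneg : Finset.univ.filter (fun i : (Fin N ⊕ Fin N) => ¬ 0 < μ i) =
        Finset.univ.filter (fun i : (Fin N ⊕ Fin N) => μ i < 0) := by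
      ext i
      simp only [Finset.mem_filter, Finset.mem_univ, true_and, not_lt]
      exact ⟨fun h => h.lt_of_ne (hμ0 i), fun h => h.le⟩
    rw [hneg, hcard] at htot
    have hcardι : (Finset.univ : Finset (Fin N ⊕ Fin N)).card = N + N := by
      simp [Finset.card_univ]
    rw [hcardι] at htot
    omega
  have hcardsub : Fintype.card {i : (Fin N ⊕ Fin N) // 0 < μ i} = N := by
    rw [Fintype.card_subtype]; exact hNpos
  let e : Fin N ≃ {i : (Fin N ⊕ Fin N) // 0 < μ i} := (Fintype.equivFinOfCardEq hcardsub).symm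
  have heinj : ∀ m n : Fin N, ((e m : (Fin N ⊕ Fin N)) = (e n : (Fin N ⊕ Fin N))) ↔ m = n := by
    intro m n
    constructor
    · intro h; exact e.injective (Subtype.ext h)
    · intro h; rw [h]
  -- the data
  set lam : Fin N → ℝ := fun n => μ (e n) with hlamdef
  have hlam : ∀ n, 0 < lam n := fun n => (e n).2
  set φ : Fin N → (Fin N ⊕ Fin N) → ℂ := fun n => v (e n) with hφdef
  set w : Fin N → (Fin N ⊕ Fin N) → ℂ := fun n => T1 *ᵥ star (φ n) with hwdef
  set ψp : Fin N → (Fin N ⊕ Fin N) → ℂ := fun n => ((Real.sqrt (lam n) : ℝ) : ℂ) • (K⁻¹ *ᵥ φ n) with hψpdef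
  set ψm : Fin N → (Fin N ⊕ Fin N) → ℂ := fun n => T1 *ᵥ star (ψp n) with hψmdef
  have hs : ∀ n, ((Real.sqrt (lam n) : ℝ) : ℂ) * ((Real.sqrt (lam n) : ℝ) : ℂ) =
      ((lam n : ℝ) : ℂ) := by
    intro n
    rw [← Complex.ofReal_mul, Real.mul_self_sqrt (hlam n).le]
  have hstarR : ∀ r : ℝ, star ((r : ℝ) : ℂ) = ((r : ℝ) : ℂ) := fun r => by
    exact Complex.conj_ofReal r
  have hsstar : ∀ n, star (((Real.sqrt (lam n) : ℝ) : ℂ)) = ((Real.sqrt (lam n) : ℝ) : ℂ) :=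
    fun n => hstarR _
  have hsstar' : ∀ {n : Fin N}, star (((lam n : ℝ) : ℂ)) = ((lam n : ℝ) : ℂ) :=
    fun {n} => hstarR _
  -- eigenvector equations for φ and w
  have hφeig : ∀ n, M *ᵥ φ n = ((lam n : ℝ) : ℂ) • φ n := fun n => hveig (e n)
  have hMT1 : M * T1 = -(T1 * M.map (starRingEnd ℂ)) := by
    have := congrArg (fun A => A * T1) hMbos
    calc M * T1 = -(-M) * T1 := by rw [neg_neg]
      _ = -(-M * T1) := by rw [Matrix.neg_mul]
      _ = -(T1 * M.map (starRingEnd ℂ) * T1 * T1) := by rw [hMbos]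
      _ = -(T1 * M.map (starRingEnd ℂ) * (T1 * T1)) := by rw [Matrix.mul_assoc]
      _ = -(T1 * M.map (starRingEnd ℂ)) := by rw [hT1sq, Matrix.mul_one]
  have hweig : ∀ n, M *ᵥ w n = (-((lam n : ℝ) : ℂ)) • w n := by
    intro n
    calc M *ᵥ w n = (M * T1) *ᵥ star (φ n) := by rw [hwdef]; rw [Matrix.mulVec_mulVec]
      _ = (-(T1 * M.map (starRingEnd ℂ))) *ᵥ star (φ n) := by rw [hMT1]
      _ = -(T1 *ᵥ (M.map (starRingEnd ℂ) *ᵥ star (φ n))) := by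
          rw [Matrix.neg_mulVec, Matrix.mulVec_mulVec]
      _ = -(T1 *ᵥ star (M *ᵥ φ n)) := by rw [bog_map_conj_mulVec_star]
      _ = -(T1 *ᵥ star (((lam n : ℝ) : ℂ) • φ n)) := by rw [hφeig]
      _ = -(T1 *ᵥ (((lam n : ℝ) : ℂ) • star (φ n))) := by
          rw [star_smul, hsstar']
      _ = -(((lam n : ℝ) : ℂ) • (T1 *ᵥ star (φ n))) := by rw [Matrix.mulVec_smul]
      _ = (-((lam n : ℝ) : ℂ)) • w n := by rw [hwdef, ← neg_smul]
  -- Minv eigen equations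
  have hMinveig : ∀ (x : (Fin N ⊕ Fin N) → ℂ) (c : ℂ), c ≠ 0 → M *ᵥ x = c • x → Minv *ᵥ x = c⁻¹ • x := by
    intro x c hc hx
    have h1 : Minv *ᵥ (M *ᵥ x) = x := by
      rw [Matrix.mulVec_mulVec, hMinvM, Matrix.one_mulVec]
    rw [hx, Matrix.mulVec_smul] at h1
    calc Minv *ᵥ x = c⁻¹ • (c • (Minv *ᵥ x)) := by
          rw [smul_smul, inv_mul_cancel₀ hc, one_smul]
      _ = c⁻¹ • x := by rw [h1]
  -- orthonormality of the w family and cross relations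
  have hworth : ∀ m n, star (w m) ⬝ᵥ w n = if m = n then (1 : ℂ) else 0 := by
    intro m n
    have h1 : star (w m) ⬝ᵥ w n = star (star (φ m)) ⬝ᵥ ((T1ᴴ * T1) *ᵥ star (φ n)) := by
      rw [hwdef]
      rw [bog_star_mulVec_dot, Matrix.mulVec_mulVec]
    rw [h1, hT1H, hT1sq, Matrix.one_mulVec, star_star, dotProduct_comm]
    rw [hvorth]
    by_cases h : m = n
    · subst h; simp
    · rw [if_neg, if_neg h]
      intro hh
      exact h (((heinj n m).mp hh).symm)
  have hφworthog : ∀ m n, star (φ m) ⬝ᵥ w n = 0 := by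
    intro m n
    apply bog_herm_eig_orth M hMherm (φ m) (w n) ((lam m : ℝ) : ℂ) (-((lam n : ℝ) : ℂ))
      (hφeig m) (hweig n) (Complex.conj_ofReal _)
    intro h
    have : (lam m : ℝ) = -(lam n) := by exact_mod_cast h
    linarith [hlam m, hlam n]
  have hwφorthog : ∀ m n, star (w m) ⬝ᵥ φ n = 0 := by
    intro m n
    apply bog_herm_eig_orth M hMherm (w m) (φ n) (-((lam m : ℝ) : ℂ)) ((lam n : ℝ) : ℂ)
      (hweig m) (hφeig n)
    · rw [star_neg, hstarR]
    · intro h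
      have : -(lam m : ℝ) = lam n := by exact_mod_cast h
      linarith [hlam m, hlam n]
  -- ψm in terms of w
  have hT1Ki : T1 * (K⁻¹).map (starRingEnd ℂ) = K⁻¹ * T1 := by
    have hKc : K.map (starRingEnd ℂ) = T1 * K * T1 := by
      conv_rhs => rw [← hKbos]
      calc K.map (starRingEnd ℂ)
          = (T1 * T1) * K.map (starRingEnd ℂ) * (T1 * T1) := by rw [hT1sq]; noncomm_ring
        _ = T1 * (T1 * K.map (starRingEnd ℂ) * T1) * T1 := by noncomm_ring
    have hleft : (K⁻¹).map (starRingEnd ℂ) * K.map (starRingEnd ℂ) = 1 := by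
      rw [← Matrix.map_mul, hKiK]
      exact Matrix.map_one _ (map_zero _) (map_one _)
    have hright : K.map (starRingEnd ℂ) * (T1 * K⁻¹ * T1) = 1 := by
      rw [hKc]
      calc T1 * K * T1 * (T1 * K⁻¹ * T1)
          = T1 * K * (T1 * T1) * K⁻¹ * T1 := by noncomm_ring
        _ = T1 * (K * K⁻¹) * T1 := by rw [hT1sq]; noncomm_ring
        _ = T1 * T1 := by rw [hKKi]; noncomm_ring
        _ = 1 := hT1sq
    have hKic : (K⁻¹).map (starRingEnd ℂ) = T1 * K⁻¹ * T1 := by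
      calc (K⁻¹).map (starRingEnd ℂ)
          = (K⁻¹).map (starRingEnd ℂ) * (K.map (starRingEnd ℂ) * (T1 * K⁻¹ * T1)) := by
            rw [hright, Matrix.mul_one]
        _ = ((K⁻¹).map (starRingEnd ℂ) * K.map (starRingEnd ℂ)) * (T1 * K⁻¹ * T1) := by
            rw [← Matrix.mul_assoc]
        _ = T1 * K⁻¹ * T1 := by rw [hleft, Matrix.one_mul]
    rw [hKic]
    calc T1 * (T1 * K⁻¹ * T1) = (T1 * T1) * K⁻¹ * T1 := by noncomm_ring
      _ = K⁻¹ * T1 := by rw [hT1sq]; noncomm_ring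
  have hψmw : ∀ n, ψm n = ((Real.sqrt (lam n) : ℝ) : ℂ) • (K⁻¹ *ᵥ w n) := by
    intro n
    calc ψm n = T1 *ᵥ star (((Real.sqrt (lam n) : ℝ) : ℂ) • (K⁻¹ *ᵥ φ n)) := rfl
      _ = T1 *ᵥ (((Real.sqrt (lam n) : ℝ) : ℂ) • star (K⁻¹ *ᵥ φ n)) := by
          rw [star_smul, hsstar]
      _ = ((Real.sqrt (lam n) : ℝ) : ℂ) • (T1 *ᵥ star (K⁻¹ *ᵥ φ n)) := by
          rw [Matrix.mulVec_smul]
      _ = ((Real.sqrt (lam n) : ℝ) : ℂ) • (T1 *ᵥ ((K⁻¹).map (starRingEnd ℂ) *ᵥ star (φ n))) := by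
          rw [bog_map_conj_mulVec_star]
      _ = ((Real.sqrt (lam n) : ℝ) : ℂ) • ((T1 * (K⁻¹).map (starRingEnd ℂ)) *ᵥ star (φ n)) := by
          rw [Matrix.mulVec_mulVec]
      _ = ((Real.sqrt (lam n) : ℝ) : ℂ) • ((K⁻¹ * T1) *ᵥ star (φ n)) := by rw [hT1Ki]
      _ = ((Real.sqrt (lam n) : ℝ) : ℂ) • (K⁻¹ *ᵥ (T1 *ᵥ star (φ n))) := by
          rw [Matrix.mulVec_mulVec]
      _ = ((Real.sqrt (lam n) : ℝ) : ℂ) • (K⁻¹ *ᵥ w n) := rfl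
  -- eigen equations for ψ
  have hT3HK : T3 * H = K⁻¹ * M * K := by
    calc T3 * H = T3 * (K * K) := by rw [hKK]
      _ = (K⁻¹ * K) * T3 * (K * K) := by rw [hKiK, Matrix.one_mul]
      _ = K⁻¹ * (K * T3 * K) * K := by noncomm_ring
      _ = K⁻¹ * M * K := by rw [hMdef]
  have hT3Heig : ∀ (x : (Fin N ⊕ Fin N) → ℂ) (c : ℂ), M *ᵥ x = c • x →
      (T3 * H) *ᵥ (K⁻¹ *ᵥ x) = c • (K⁻¹ *ᵥ x) := by
    intro x c hx
    calc (T3 * H) *ᵥ (K⁻¹ *ᵥ x) = (K⁻¹ * M * K * K⁻¹) *ᵥ x := by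
          rw [hT3HK, Matrix.mulVec_mulVec]
      _ = (K⁻¹ * M) *ᵥ x := by
          rw [Matrix.mul_assoc (K⁻¹ * M) K K⁻¹, hKKi, Matrix.mul_one]
      _ = K⁻¹ *ᵥ (M *ᵥ x) := by rw [Matrix.mulVec_mulVec]
      _ = K⁻¹ *ᵥ (c • x) := by rw [hx]
      _ = c • (K⁻¹ *ᵥ x) := by rw [Matrix.mulVec_smul]
  -- dot product reduction
  have hKinvH : (K⁻¹)ᴴ = K⁻¹ := by rw [conjTranspose_nonsing_inv, hKherm.eq]
  have hdot : ∀ x y : (Fin N ⊕ Fin N) → ℂ, star (K⁻¹ *ᵥ x) ⬝ᵥ (T3 *ᵥ (K⁻¹ *ᵥ y)) = star x ⬝ᵥ (Minv *ᵥ y) := by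
    intro x y
    rw [bog_star_mulVec_dot, Matrix.mulVec_mulVec, Matrix.mulVec_mulVec, hKinvH, hMinvdef,
      Matrix.mul_assoc]
  -- the four orthonormality relations
  have hdotφφ : ∀ m n, star (K⁻¹ *ᵥ φ m) ⬝ᵥ (T3 *ᵥ (K⁻¹ *ᵥ φ n)) =
      ((lam n : ℝ) : ℂ)⁻¹ * (if m = n then 1 else 0) := by
    intro m n
    rw [hdot, hMinveig (φ n) _ (by exact_mod_cast (hlam n).ne') (hφeig n), dotProduct_smul,
      hvorth]
    have : (if (e m : (Fin N ⊕ Fin N)) = (e n : (Fin N ⊕ Fin N)) then (1:ℂ) else 0) = (if m = n then 1 else 0) := by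
      by_cases h : m = n
      · subst h; simp
      · rw [if_neg h, if_neg (fun hh => h ((heinj m n).mp hh))]
    rw [this]; rfl
  have hdotww : ∀ m n, star (K⁻¹ *ᵥ w m) ⬝ᵥ (T3 *ᵥ (K⁻¹ *ᵥ w n)) =
      (-((lam n : ℝ) : ℂ))⁻¹ * (if m = n then 1 else 0) := by
    intro m n
    have hc : (-((lam n : ℝ) : ℂ)) ≠ 0 := by
      simp only [ne_eq, neg_eq_zero]
      exact_mod_cast (hlam n).ne'
    rw [hdot, hMinveig (w n) _ hc (hweig n), dotProduct_smul, hworth]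
    rfl
  have hdotφw : ∀ m n, star (K⁻¹ *ᵥ φ m) ⬝ᵥ (T3 *ᵥ (K⁻¹ *ᵥ w n)) = 0 := by
    intro m n
    have hc : (-((lam n : ℝ) : ℂ)) ≠ 0 := by
      simp only [ne_eq, neg_eq_zero]
      exact_mod_cast (hlam n).ne'
    rw [hdot, hMinveig (w n) _ hc (hweig n), dotProduct_smul, hφworthog, smul_zero]
  have hdotwφ : ∀ m n, star (K⁻¹ *ᵥ w m) ⬝ᵥ (T3 *ᵥ (K⁻¹ *ᵥ φ n)) = 0 := by
    intro m n
    rw [hdot, hMinveig (φ n) _ (by exact_mod_cast (hlam n).ne') (hφeig n), dotProduct_smul,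
      hwφorthog, smul_zero]
  -- scalar-handling for dot products of ψ's
  have hψdot : ∀ (m n : Fin N) (x y : (Fin N ⊕ Fin N) → ℂ),
      star (((Real.sqrt (lam m) : ℝ) : ℂ) • (K⁻¹ *ᵥ x)) ⬝ᵥ
        (T3 *ᵥ (((Real.sqrt (lam n) : ℝ) : ℂ) • (K⁻¹ *ᵥ y))) =
      ((Real.sqrt (lam m) : ℝ) : ℂ) * ((Real.sqrt (lam n) : ℝ) : ℂ) *
        (star (K⁻¹ *ᵥ x) ⬝ᵥ (T3 *ᵥ (K⁻¹ *ᵥ y))) := by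
    intro m n x y
    rw [Matrix.mulVec_smul, star_smul, hsstar, smul_dotProduct, dotProduct_smul]
    simp [smul_eq_mul]; ring
  -- completeness machinery
  set U : Matrix (Fin N ⊕ Fin N) (Fin N ⊕ Fin N) ℂ :=
    Matrix.of (fun i (j : (Fin N ⊕ Fin N)) => Sum.elim (fun n => φ n i) (fun n => w n i) j) with hUdef
  have hUU : Uᴴ * U = 1 := by
    ext j j'
    have hentry : (Uᴴ * U) j j' = star (fun i => U i j) ⬝ᵥ (fun i => U i j') := by
      simp [Matrix.mul_apply, Matrix.conjTranspose_apply, dotProduct, mul_comm]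
    rw [hentry]
    rcases j with m | m <;> rcases j' with n | n
    · have := hvorth (e m) (e n)
      have h2 : (if (e m : (Fin N ⊕ Fin N)) = (e n : (Fin N ⊕ Fin N)) then (1:ℂ) else 0) = (if m = n then 1 else 0) := by
        by_cases h : m = n
        · subst h; simp
        · rw [if_neg h, if_neg (fun hh => h ((heinj m n).mp hh))]
      rw [show (fun i => U i (Sum.inl m)) = φ m from rfl,
        show (fun i => U i (Sum.inl n)) = φ n from rfl]
      rw [show star (φ m) ⬝ᵥ φ n = star (v (e m)) ⬝ᵥ v (e n) from rfl, this, h2]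
      simp [Matrix.one_apply]
    · rw [show (fun i => U i (Sum.inl m)) = φ m from rfl,
        show (fun i => U i (Sum.inr n)) = w n from rfl, hφworthog]
      simp [Matrix.one_apply]
    · rw [show (fun i => U i (Sum.inr m)) = w m from rfl,
        show (fun i => U i (Sum.inl n)) = φ n from rfl, hwφorthog]
      simp [Matrix.one_apply]
    · rw [show (fun i => U i (Sum.inr m)) = w m from rfl,
        show (fun i => U i (Sum.inr n)) = w n from rfl, hworth]
      by_cases h : m = n
      · subst h; simp [Matrix.one_apply]
      · simp [Matrix.one_apply, h]
  have hUU' : U * Uᴴ = 1 := mul_eq_one_comm.mp hUU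
  have hsum : ∑ n : Fin N, (vecMulVec (φ n) (star (φ n)) + vecMulVec (w n) (star (w n))) = 1 := by
    rw [← hUU']
    ext i k
    simp only [Matrix.sum_apply, Matrix.add_apply, vecMulVec_apply, Pi.star_apply,
      Matrix.mul_apply, Matrix.conjTranspose_apply, Fintype.sum_sum_type, Matrix.of_apply,
      Sum.elim_inl, Sum.elim_inr, hUdef]
    rw [← Finset.sum_add_distrib]
  -- completeness term computation
  have hterm : ∀ (x : (Fin N ⊕ Fin N) → ℂ) (c : ℂ), c ≠ 0 → star c = c → M *ᵥ x = c • x →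
      vecMulVec (K⁻¹ *ᵥ x) (star (K⁻¹ *ᵥ x)) * T3 =
        c⁻¹ • (K⁻¹ * vecMulVec x (star x) * K) := by
    intro x c hc hcr hx
    have hstar : star (K⁻¹ *ᵥ x) = (K⁻¹).map (starRingEnd ℂ) *ᵥ star x :=
      (bog_map_conj_mulVec_star K⁻¹ x).symm
    have hKiT3 : ((K⁻¹).map (starRingEnd ℂ))ᵀ * T3 = Minv * K := by
      have h1 : ((K⁻¹).map (starRingEnd ℂ))ᵀ = (K⁻¹)ᴴ := rfl
      rw [h1, hKinvH]
      calc K⁻¹ * T3 = K⁻¹ * T3 * (K⁻¹ * K) := by rw [hKiK, Matrix.mul_one]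
        _ = (K⁻¹ * T3 * K⁻¹) * K := by noncomm_ring
        _ = Minv * K := by rw [hMinvdef]
    have hMinvc : Minv.map (starRingEnd ℂ) = Minvᵀ := by
      ext i j
      have := congrFun (congrFun hMinvherm j) i
      simpa [Matrix.conjTranspose_apply] using this
    have hxMinv : Minvᵀ *ᵥ star x = c⁻¹ • star x := by
      rw [← hMinvc, bog_map_conj_mulVec_star, hMinveig x c hc hx, star_smul, star_inv₀, hcr]
    calc vecMulVec (K⁻¹ *ᵥ x) (star (K⁻¹ *ᵥ x)) * T3
        = (K⁻¹ * vecMulVec x (star (K⁻¹ *ᵥ x))) * T3 := by rw [bog_vecMulVec_mulVec_left]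
      _ = (K⁻¹ * (vecMulVec x (star x) * ((K⁻¹).map (starRingEnd ℂ))ᵀ)) * T3 := by
          rw [hstar, bog_vecMulVec_mulVec_right]
      _ = K⁻¹ * vecMulVec x (star x) * (((K⁻¹).map (starRingEnd ℂ))ᵀ * T3) := by
          noncomm_ring
      _ = K⁻¹ * vecMulVec x (star x) * (Minv * K) := by rw [hKiT3]
      _ = K⁻¹ * (vecMulVec x (star x) * Minv) * K := by noncomm_ring
      _ = K⁻¹ * (vecMulVec x (Minvᵀ *ᵥ star x)) * K := by
          rw [bog_vecMulVec_mulVec_right, Matrix.transpose_transpose]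
      _ = K⁻¹ * (c⁻¹ • vecMulVec x (star x)) * K := by
          rw [hxMinv, bog_vecMulVec_smul_right]
      _ = c⁻¹ • (K⁻¹ * vecMulVec x (star x) * K) := by
          rw [Matrix.mul_smul, Matrix.smul_mul]
  -- ψp unfolded
  have hψpw : ∀ n, ψp n = ((Real.sqrt (lam n) : ℝ) : ℂ) • (K⁻¹ *ᵥ φ n) := fun n => rfl
  have hlamne : ∀ n : Fin N, ((lam n : ℝ) : ℂ) ≠ 0 := by
    intro n; exact_mod_cast (hlam n).ne'
  have hneglamne : ∀ n : Fin N, (-((lam n : ℝ) : ℂ)) ≠ 0 := by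
    intro n; simp only [ne_eq, neg_eq_zero]; exact hlamne n
  -- completeness terms
  have htermp : ∀ n, vecMulVec (ψp n) (star (ψp n)) * T3 =
      K⁻¹ * vecMulVec (φ n) (star (φ n)) * K := by
    intro n
    rw [hψpw n, star_smul, hsstar, bog_vecMulVec_smul_left, bog_vecMulVec_smul_right,
      smul_smul, hs n, Matrix.smul_mul, hterm (φ n) _ (hlamne n) hsstar' (hφeig n),
      smul_smul, mul_inv_cancel₀ (hlamne n), one_smul]
  have htermm : ∀ n, vecMulVec (ψm n) (star (ψm n)) * T3 =
      -(K⁻¹ * vecMulVec (w n) (star (w n)) * K) := by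
    intro n
    have hstarneg : star (-((lam n : ℝ) : ℂ)) = -((lam n : ℝ) : ℂ) := by
      rw [star_neg, hstarR]
    rw [hψmw n, star_smul, hsstar, bog_vecMulVec_smul_left, bog_vecMulVec_smul_right,
      smul_smul, hs n, Matrix.smul_mul, hterm (w n) _ (hneglamne n) hstarneg (hweig n),
      smul_smul, inv_neg, mul_neg, mul_inv_cancel₀ (hlamne n), neg_smul, one_smul]
  refine ⟨lam, ψp, ψm, hlam, fun n => rfl, ?_, ?_, ?_, ?_, ?_, ?_, ?_⟩
  · -- positive eigenvectors
    intro n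
    calc (T3 * H) *ᵥ ψp n
        = (T3 * H) *ᵥ (((Real.sqrt (lam n) : ℝ) : ℂ) • (K⁻¹ *ᵥ φ n)) := by rw [hψpw n]
      _ = ((Real.sqrt (lam n) : ℝ) : ℂ) • ((T3 * H) *ᵥ (K⁻¹ *ᵥ φ n)) := by
          rw [Matrix.mulVec_smul]
      _ = ((Real.sqrt (lam n) : ℝ) : ℂ) • (((lam n : ℝ) : ℂ) • (K⁻¹ *ᵥ φ n)) := by
          rw [hT3Heig (φ n) _ (hφeig n)]
      _ = ((lam n : ℝ) : ℂ) • ψp n := by rw [hψpw n, smul_smul, smul_smul, mul_comm]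
  · -- negative eigenvectors
    intro n
    calc (T3 * H) *ᵥ ψm n
        = (T3 * H) *ᵥ (((Real.sqrt (lam n) : ℝ) : ℂ) • (K⁻¹ *ᵥ w n)) := by rw [hψmw n]
      _ = ((Real.sqrt (lam n) : ℝ) : ℂ) • ((T3 * H) *ᵥ (K⁻¹ *ᵥ w n)) := by
          rw [Matrix.mulVec_smul]
      _ = ((Real.sqrt (lam n) : ℝ) : ℂ) • ((-((lam n : ℝ) : ℂ)) • (K⁻¹ *ᵥ w n)) := by
          rw [hT3Heig (w n) _ (hweig n)]
      _ = (-((lam n : ℝ) : ℂ)) • ψm n := by rw [hψmw n, smul_smul, smul_smul, mul_comm]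
  · -- ψp-ψp orthonormality
    intro m n
    rw [hψpw m, hψpw n, hψdot m n (φ m) (φ n), hdotφφ m n]
    by_cases h : m = n
    · subst h
      rw [if_pos rfl, mul_one, hs m, mul_inv_cancel₀ (hlamne m)]
    · rw [if_neg h, mul_zero, mul_zero]
  · -- ψm-ψm orthonormality
    intro m n
    rw [hψmw m, hψmw n, hψdot m n (w m) (w n), hdotww m n]
    by_cases h : m = n
    · subst h
      rw [if_pos rfl, mul_one, inv_neg, mul_neg, hs m, mul_inv_cancel₀ (hlamne m)]
      exact (if_pos rfl).symm
    · rw [if_neg h, mul_zero, mul_zero]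
      exact (if_neg h).symm
  · -- ψp-ψm cross
    intro m n
    rw [hψpw m, hψmw n, hψdot m n (φ m) (w n), hdotφw m n, mul_zero]
  · -- ψm-ψp cross
    intro m n
    rw [hψmw m, hψpw n, hψdot m n (w m) (φ n), hdotwφ m n, mul_zero]
  · -- completeness
    calc (∑ n : Fin N, (vecMulVec (ψp n) (star (ψp n)) - vecMulVec (ψm n) (star (ψm n)))) * T3
        = ∑ n : Fin N, (vecMulVec (ψp n) (star (ψp n)) - vecMulVec (ψm n) (star (ψm n))) * T3 := by
          rw [Finset.sum_mul]
      _ = ∑ n : Fin N, (K⁻¹ * vecMulVec (φ n) (star (φ n)) * K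
            + K⁻¹ * vecMulVec (w n) (star (w n)) * K) := by
          refine Finset.sum_congr rfl fun n _ => ?_
          rw [Matrix.sub_mul, htermp n, htermm n, sub_neg_eq_add]
      _ = K⁻¹ * (∑ n : Fin N, (vecMulVec (φ n) (star (φ n)) + vecMulVec (w n) (star (w n)))) * K := by
          rw [Finset.mul_sum, Finset.sum_mul]
          refine Finset.sum_congr rfl fun n _ => ?_
          rw [Matrix.mul_add, Matrix.add_mul]
      _ = K⁻¹ * 1 * K := by rw [hsum]
      _ = 1 := by rw [Matrix.mul_one, hKiK]
end
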